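/- Low-gain disturbance estimator stability: let A be Schur stable, G_d(1) = C(I−A)^{-1}B_d have full column rank, and L = G_d(1)^†. Then there exists ε* > 0 such that for all ε ∈ (0, ε*), the matrix 𝒜 − ℒ𝒞 is Schur stable, where 𝒜 = [[A, B_d],[0, I_q]], 𝒞 = [C, 0], and ℒ = [[0],[εL]]. -/

import Mathlib

open Matrix Complex

attribute [local instance] Matrix.linftyOpNormedAddCommGroup Matrix.linftyOpNormedSpace

set_option maxHeartbeats 1000000 in
/-- Low-gain disturbance estimator design: if `A` is Schur stable, the DC gain
`G_d(1) = C (I - A)⁻¹ B_d` has full column rank, and `L = G_d(1)†`, then there exists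
`ε* > 0` such that for all `ε ∈ (0, ε*)` the error matrix `𝒜 - ℒ𝒞` is Schur stable,
where `𝒜 = [[A, B_d],[0, I]]`, `𝒞 = [C, 0]`, `ℒ = [[0],[εL]]`. -/
theorem low_gain_estimator_schur_stable
    {n q p : ℕ} (A : Matrix (Fin n) (Fin n) ℝ)
    (Bd : Matrix (Fin n) (Fin q) ℝ) (C : Matrix (Fin p) (Fin n) ℝ)
    (hq : q ≤ p)
    (hSchur : ∀ μ ∈ spectrum ℂ (A.map (Complex.ofReal ·)), ‖μ‖ < 1)
    (G : Matrix (Fin p) (Fin q) ℝ)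
    (hG : G = C * ((1 : Matrix (Fin n) (Fin n) ℝ) - A)⁻¹ * Bd)
    (hrank : G.rank = q)
    (L : Matrix (Fin q) (Fin p) ℝ)
    (hL : L = (G.transpose * G)⁻¹ * G.transpose) :
    ∃ εstar > (0 : ℝ), ∀ ε ∈ Set.Ioo (0 : ℝ) εstar,
      ∀ μ ∈ spectrum ℂ
        ((Matrix.fromBlocks A Bd 0 (1 : Matrix (Fin q) (Fin q) ℝ) -
          Matrix.fromRows (0 : Matrix (Fin n) (Fin p) ℝ) (ε • L) *
            Matrix.fromCols C (0 : Matrix (Fin p) (Fin q) ℝ)).map (Complex.ofReal ·)),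
        ‖μ‖ < 1 := by
  classical
  set f : ℝ →+* ℂ := Complex.ofRealHom with hf
  have hmapf : ∀ {m l : Type} (M : Matrix m l ℝ),
      M.map (Complex.ofReal ·) = M.map f := fun M => rfl
  set A' : Matrix (Fin n) (Fin n) ℂ := A.map f with hA'
  set Bd' : Matrix (Fin n) (Fin q) ℂ := Bd.map f with hBd'
  set C' : Matrix (Fin p) (Fin n) ℂ := C.map f with hC'
  set L' : Matrix (Fin q) (Fin p) ℂ := L.map f with hL'
  -- points with 1 ≤ ‖μ‖ give invertible resolvents
  have hnotspec : ∀ μ : ℂ, 1 ≤ ‖μ‖ →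
      IsUnit (μ • (1 : Matrix (Fin n) (Fin n) ℂ) - A') := by
    intro μ hμ
    by_contra hc
    have hmem : μ ∈ spectrum ℂ A' := by
      rw [spectrum.mem_iff, Algebra.algebraMap_eq_smul_one]
      exact hc
    exact absurd (hSchur μ (by simpa [hmapf] using hmem)) (not_lt.mpr hμ)
  -- invertibility of 1 - A over ℝ
  have h1A : ((1 : Matrix (Fin n) (Fin n) ℂ) - A')
      = ((1 : Matrix (Fin n) (Fin n) ℝ) - A).map f := by
    rw [← RingHom.mapMatrix_apply, map_sub, _root_.map_one, RingHom.mapMatrix_apply]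
  have hdet1 : IsUnit ((1 : Matrix (Fin n) (Fin n) ℝ) - A).det := by
    have h := hnotspec 1 (by simp)
    rw [one_smul, h1A] at h
    have hdet := (Matrix.isUnit_iff_isUnit_det _).mp h
    rw [← RingHom.mapMatrix_apply, ← RingHom.map_det] at hdet
    rw [isUnit_iff_ne_zero] at hdet ⊢
    simpa [hf] using hdet
  set X : Matrix (Fin n) (Fin n) ℝ := ((1 : Matrix (Fin n) (Fin n) ℝ) - A)⁻¹ with hX
  set X' : Matrix (Fin n) (Fin n) ℂ := X.map f with hX'
  -- GᵀG invertible
  have hGtG : IsUnit (G.transpose * G) := by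
    have hr : (G.transpose * G).rank = q := by
      rw [Matrix.rank_transpose_mul_self]; exact hrank
    have hrange : LinearMap.range (G.transpose * G).mulVecLin = ⊤ := by
      apply Submodule.eq_top_of_finrank_eq
      have h0 : (G.transpose * G).rank =
          Module.finrank ℝ (LinearMap.range (G.transpose * G).mulVecLin) := rfl
      rw [← h0, hr, Module.finrank_pi]
      simp
    have hsurj : Function.Surjective (G.transpose * G).mulVec := by
      intro y
      obtain ⟨x, hx⟩ := LinearMap.range_eq_top.mp hrange y
      exact ⟨x, hx⟩
    exact Matrix.mulVec_surjective_iff_isUnit.mp hsurj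
  have hLG : L * G = 1 := by
    rw [hL, Matrix.mul_assoc]
    exact Matrix.nonsing_inv_mul _ ((Matrix.isUnit_iff_isUnit_det _).mp hGtG)
  -- resolvent at 1 is complexification of X
  have hRz1 : ((1 : ℂ) • (1 : Matrix (Fin n) (Fin n) ℂ) - A')⁻¹ = X' := by
    rw [one_smul]
    apply Matrix.inv_eq_right_inv
    rw [h1A, hX', hX, ← Matrix.map_mul, Matrix.mul_nonsing_inv _ hdet1,
      Matrix.map_one _ (map_zero f) (_root_.map_one f)]
  set J : Matrix (Fin q) (Fin n) ℂ := L' * C' with hJ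
  have hJmap : J = (L * C).map f := by rw [hJ, Matrix.map_mul]
  -- complexified DC-gain identity
  have hT1 : J * X' * Bd' = 1 := by
    have hreal : L * C * X * Bd = 1 := by
      rw [Matrix.mul_assoc L C X, Matrix.mul_assoc L (C * X) Bd,
        show C * X * Bd = G from hG.symm, hLG]
    rw [hJmap, hX', hBd', ← Matrix.map_mul, ← Matrix.map_mul, hreal,
      Matrix.map_one _ (map_zero f) (_root_.map_one f)]
  -- the resolvent function and its uniform bound on the annulus
  set Rz : ℂ → Matrix (Fin n) (Fin n) ℂ :=
    fun μ => (μ • (1 : Matrix (Fin n) (Fin n) ℂ) - A')⁻¹ with hRz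
  set B0 : ℝ := ‖(fromBlocks A' Bd' 0 1 : Matrix (Fin n ⊕ Fin q) (Fin n ⊕ Fin q) ℂ)‖ +
      ‖(fromBlocks 0 0 J 0 : Matrix (Fin n ⊕ Fin q) (Fin n ⊕ Fin q) ℂ)‖ with hB0
  set S : Set ℂ := Metric.closedBall 0 B0 \ Metric.ball 0 1 with hS
  have hScompact : IsCompact S := (isCompact_closedBall 0 B0).diff Metric.isOpen_ball
  have hSmem : ∀ μ ∈ S, 1 ≤ ‖μ‖ := by
    intro μ hμ
    have h := hμ.2
    rw [Metric.mem_ball, dist_zero_right, not_lt] at h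
    exact h
  have hcont : ContinuousOn Rz S := by
    have hMc : Continuous fun μ : ℂ => μ • (1 : Matrix (Fin n) (Fin n) ℂ) - A' :=
      (continuous_id.smul continuous_const).sub continuous_const
    have hdetne : ∀ μ ∈ S, (μ • (1 : Matrix (Fin n) (Fin n) ℂ) - A').det ≠ 0 := fun μ hμ =>
      ((Matrix.isUnit_iff_isUnit_det _).mp (hnotspec μ (hSmem μ hμ))).ne_zero
    have hco : ContinuousOn
        (fun μ : ℂ => ((μ • (1 : Matrix (Fin n) (Fin n) ℂ) - A').det)⁻¹ •
          (μ • (1 : Matrix (Fin n) (Fin n) ℂ) - A').adjugate) S :=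
      (hMc.matrix_det.continuousOn.inv₀ hdetne).smul hMc.matrix_adjugate.continuousOn
    refine hco.congr fun μ _ => ?_
    show (μ • (1 : Matrix (Fin n) (Fin n) ℂ) - A')⁻¹ = _
    rw [Matrix.inv_def, Ring.inverse_eq_inv']
  obtain ⟨R, hR⟩ := hScompact.exists_bound_of_continuousOn hcont
  set R' : ℝ := max R 0 with hR'
  set K : ℝ := ‖J‖ * R' * ‖X'‖ * ‖Bd'‖ with hK
  have hK0 : 0 ≤ K :=
    mul_nonneg (mul_nonneg (mul_nonneg (norm_nonneg _) (le_max_right _ _)) (norm_nonneg _))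
      (norm_nonneg _)
  refine ⟨min 1 (1 / (2 * K + 2)), lt_min one_pos (by positivity), ?_⟩
  rintro ε ⟨hε0, hεs⟩ μ hμ
  by_contra hlt
  push_neg at hlt
  have hε1 : ε < 1 := lt_of_lt_of_le hεs (min_le_left _ _)
  have hεK : ε * (2 * K + 2) < 1 := by
    have h2 : ε < 1 / (2 * K + 2) := lt_of_lt_of_le hεs (min_le_right _ _)
    have h3 : (0 : ℝ) < 2 * K + 2 := by linarith
    calc ε * (2 * K + 2) < (1 / (2 * K + 2)) * (2 * K + 2) := mul_lt_mul_of_pos_right h2 h3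
      _ = 1 := by field_simp
  -- the block structure of the closed-loop matrix
  have hblockR : (fromBlocks A Bd 0 (1 : Matrix (Fin q) (Fin q) ℝ) -
      fromRows (0 : Matrix (Fin n) (Fin p) ℝ) (ε • L) *
        fromCols C (0 : Matrix (Fin p) (Fin q) ℝ)) =
      fromBlocks A Bd (-(ε • (L * C))) 1 := by
    rw [Matrix.fromRows_mul_fromCols]
    ext (i | i) (j | j) <;>
      simp [Matrix.sub_apply, Matrix.smul_apply, Matrix.mul_apply]
  set M' : Matrix (Fin n ⊕ Fin q) (Fin n ⊕ Fin q) ℂ :=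
    fromBlocks A' Bd' (-((ε : ℂ) • J)) 1 with hM'
  have hmapM : (fromBlocks A Bd 0 (1 : Matrix (Fin q) (Fin q) ℝ) -
      fromRows (0 : Matrix (Fin n) (Fin p) ℝ) (ε • L) *
        fromCols C (0 : Matrix (Fin p) (Fin q) ℝ)).map (Complex.ofReal ·) = M' := by
    rw [hmapf, hblockR, hM', hJmap]
    ext (i | i) (j | j) <;>
      simp [hA', hBd', Matrix.map_apply, Matrix.mul_apply, Matrix.one_apply, apply_ite, hf] <;>
      push_cast <;> ring
  rw [hmapM] at hμ
  -- extract an eigenvector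
  have hdet0 : (μ • (1 : Matrix (Fin n ⊕ Fin q) (Fin n ⊕ Fin q) ℂ) - M').det = 0 := by
    rw [spectrum.mem_iff, Algebra.algebraMap_eq_smul_one] at hμ
    by_contra hd
    exact hμ ((Matrix.isUnit_iff_isUnit_det _).mpr (isUnit_iff_ne_zero.mpr hd))
  obtain ⟨v, hv0, hv⟩ := (Matrix.exists_mulVec_eq_zero_iff).mpr hdet0
  have hvEq : M' *ᵥ v = μ • v := by
    rw [Matrix.sub_mulVec, Matrix.smul_mulVec, Matrix.one_mulVec, sub_eq_zero] at hv
    exact hv.symm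
  set x : Fin n → ℂ := v ∘ Sum.inl with hx
  set y : Fin q → ℂ := v ∘ Sum.inr with hy
  have hmulv := Matrix.fromBlocks_mulVec A' Bd' (-((ε : ℂ) • J)) 1 v
  rw [hvEq] at hmulv
  have eq1 : A' *ᵥ x + Bd' *ᵥ y = μ • x := by
    funext i
    have h := congrFun hmulv (Sum.inl i)
    simpa [hx, hy] using h.symm
  have eq2 : (-((ε : ℂ) • J)) *ᵥ x + y = μ • y := by
    funext i
    have h := congrFun hmulv (Sum.inr i)
    simpa [Matrix.one_mulVec, hx, hy] using h.symm
  -- y ≠ 0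
  have hy0 : y ≠ 0 := by
    intro hy0
    have hx0 : x ≠ 0 := by
      intro hx0
      apply hv0
      funext i
      cases i with
      | inl i => exact congrFun hx0 i
      | inr i => exact congrFun hy0 i
    have hAx : A' *ᵥ x = μ • x := by
      have h := eq1
      rw [hy0, Matrix.mulVec_zero, add_zero] at h
      exact h
    have hnu : ¬IsUnit (μ • (1 : Matrix (Fin n) (Fin n) ℂ) - A') := by
      intro hu
      have hdet := (Matrix.isUnit_iff_isUnit_det _).mp hu
      have hex : ∃ w ≠ 0, (μ • (1 : Matrix (Fin n) (Fin n) ℂ) - A') *ᵥ w = 0 :=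
        ⟨x, hx0, by rw [Matrix.sub_mulVec, Matrix.smul_mulVec, Matrix.one_mulVec, hAx,
          sub_self]⟩
      rw [Matrix.exists_mulVec_eq_zero_iff] at hex
      exact hdet.ne_zero hex
    exact hnu (hnotspec μ hlt)
  have hynorm : 0 < ‖y‖ := norm_pos_iff.mpr hy0
  -- bound on μ
  have hμB : ‖μ‖ ≤ B0 := by
    have hvnorm : 0 < ‖v‖ := norm_pos_iff.mpr hv0
    have h1 : ‖μ‖ * ‖v‖ = ‖M' *ᵥ v‖ := by rw [hvEq, norm_smul]
    have h2 : ‖M' *ᵥ v‖ ≤ ‖M'‖ * ‖v‖ := Matrix.linfty_opNorm_mulVec _ _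
    have hsplit : M' = fromBlocks A' Bd' 0 1 + (-(ε : ℂ)) • fromBlocks 0 0 J 0 := by
      rw [hM']
      ext (i | i) (j | j) <;> simp
    have h3 : ‖M'‖ ≤ B0 := by
      rw [hsplit, hB0]
      refine le_trans (norm_add_le _ _) ?_
      have h5 : ‖(-(ε : ℂ)) • (fromBlocks 0 0 J 0 : Matrix (Fin n ⊕ Fin q) (Fin n ⊕ Fin q) ℂ)‖ =
          ε * ‖(fromBlocks 0 0 J 0 : Matrix (Fin n ⊕ Fin q) (Fin n ⊕ Fin q) ℂ)‖ := by
        rw [norm_smul, norm_neg]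
        congr 1
        simp [abs_of_pos hε0]
      rw [h5]
      nlinarith [norm_nonneg (fromBlocks 0 0 J 0 : Matrix (Fin n ⊕ Fin q) (Fin n ⊕ Fin q) ℂ)]
    have h4 : ‖μ‖ * ‖v‖ ≤ B0 * ‖v‖ := by
      rw [h1]
      exact le_trans h2 (mul_le_mul_of_nonneg_right h3 (norm_nonneg v))
    exact le_of_mul_le_mul_right h4 hvnorm
  have hμS : μ ∈ S := by
    rw [hS, Set.mem_diff]
    refine ⟨Metric.mem_closedBall.mpr (by rwa [dist_zero_right]), fun hball => ?_⟩
    rw [Metric.mem_ball, dist_zero_right] at hball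
    linarith
  -- resolvent bounds
  have hRzμ : ‖(μ • (1 : Matrix (Fin n) (Fin n) ℂ) - A')⁻¹‖ ≤ R' :=
    le_trans (hR μ hμS) (le_max_left _ _)
  have hunit : IsUnit (μ • (1 : Matrix (Fin n) (Fin n) ℂ) - A') := hnotspec μ hlt
  have hdetμ : IsUnit (μ • (1 : Matrix (Fin n) (Fin n) ℂ) - A').det :=
    (Matrix.isUnit_iff_isUnit_det _).mp hunit
  have hdet1' : IsUnit ((1 : ℂ) • (1 : Matrix (Fin n) (Fin n) ℂ) - A').det :=
    (Matrix.isUnit_iff_isUnit_det _).mp (hnotspec 1 (by simp))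
  -- x in terms of y
  have hxy : x = (μ • (1 : Matrix (Fin n) (Fin n) ℂ) - A')⁻¹ *ᵥ (Bd' *ᵥ y) := by
    have h1 : (μ • (1 : Matrix (Fin n) (Fin n) ℂ) - A') *ᵥ x = Bd' *ᵥ y := by
      rw [Matrix.sub_mulVec, Matrix.smul_mulVec, Matrix.one_mulVec, ← eq1]
      abel
    calc x = 1 *ᵥ x := (Matrix.one_mulVec x).symm
      _ = ((μ • (1 : Matrix (Fin n) (Fin n) ℂ) - A')⁻¹ *
            (μ • (1 : Matrix (Fin n) (Fin n) ℂ) - A')) *ᵥ x := by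
          rw [Matrix.nonsing_inv_mul _ hdetμ]
      _ = (μ • (1 : Matrix (Fin n) (Fin n) ℂ) - A')⁻¹ *ᵥ
            ((μ • (1 : Matrix (Fin n) (Fin n) ℂ) - A') *ᵥ x) := by
          rw [← Matrix.mulVec_mulVec]
      _ = (μ • (1 : Matrix (Fin n) (Fin n) ℂ) - A')⁻¹ *ᵥ (Bd' *ᵥ y) := by rw [h1]
  -- the key vector equation
  set T : Matrix (Fin q) (Fin q) ℂ :=
    J * (μ • (1 : Matrix (Fin n) (Fin n) ℂ) - A')⁻¹ * Bd' with hT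
  have keyEq : (1 - μ) • y = (ε : ℂ) • (T *ᵥ y) := by
    have h2 : y - μ • y = (ε : ℂ) • (J *ᵥ x) := by
      rw [Matrix.neg_mulVec, Matrix.smul_mulVec] at eq2
      rw [← eq2]
      abel
    rw [sub_smul, one_smul, h2]
    congr 1
    rw [hxy, Matrix.mulVec_mulVec, Matrix.mulVec_mulVec, hT]
  -- T is close to 1
  have hTdiff : ‖T - 1‖ ≤ K * ‖1 - μ‖ := by
    set Dμ : Matrix (Fin n) (Fin n) ℂ := μ • (1 : Matrix (Fin n) (Fin n) ℂ) - A' with hDμ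
    set D1 : Matrix (Fin n) (Fin n) ℂ := (1 : ℂ) • (1 : Matrix (Fin n) (Fin n) ℂ) - A' with hD1
    have hres : Dμ⁻¹ - D1⁻¹ = (1 - μ) • (Dμ⁻¹ * D1⁻¹) := by
      have e1 : Dμ⁻¹ * (D1 * D1⁻¹) = Dμ⁻¹ := by
        rw [Matrix.mul_nonsing_inv _ hdet1', Matrix.mul_one]
      have e2 : Dμ⁻¹ * (Dμ * D1⁻¹) = D1⁻¹ := by
        rw [← Matrix.mul_assoc, Matrix.nonsing_inv_mul _ hdetμ, Matrix.one_mul]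
      calc Dμ⁻¹ - D1⁻¹
          = Dμ⁻¹ * (D1 * D1⁻¹) - Dμ⁻¹ * (Dμ * D1⁻¹) := by rw [e1, e2]
        _ = Dμ⁻¹ * ((D1 - Dμ) * D1⁻¹) := by
            rw [← Matrix.mul_sub, ← Matrix.sub_mul]
        _ = Dμ⁻¹ * ((((1 : ℂ) - μ) • (1 : Matrix (Fin n) (Fin n) ℂ)) * D1⁻¹) := by
            rw [hD1, hDμ, sub_sub_sub_cancel_right, ← sub_smul]
        _ = (1 - μ) • (Dμ⁻¹ * D1⁻¹) := by
            rw [Matrix.smul_mul, Matrix.one_mul, Matrix.mul_smul]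
    have hTsub : T - 1 = J * (Dμ⁻¹ - D1⁻¹) * Bd' := by
      have hD1X : D1⁻¹ = X' := hRz1
      have hdist : J * (Dμ⁻¹ - D1⁻¹) * Bd' = J * Dμ⁻¹ * Bd' - J * D1⁻¹ * Bd' := by
        rw [Matrix.mul_sub, Matrix.sub_mul]
      rw [hdist, hT, ← hT1, hD1X]
    rw [hTsub, hres]
    have b1 : ‖J * ((1 - μ) • (Dμ⁻¹ * D1⁻¹)) * Bd'‖ ≤
        ‖J * ((1 - μ) • (Dμ⁻¹ * D1⁻¹))‖ * ‖Bd'‖ := Matrix.linfty_opNorm_mul _ _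
    have b2 : ‖J * ((1 - μ) • (Dμ⁻¹ * D1⁻¹))‖ ≤
        ‖J‖ * ‖(1 - μ) • (Dμ⁻¹ * D1⁻¹)‖ := Matrix.linfty_opNorm_mul _ _
    have b3 : ‖(1 - μ) • (Dμ⁻¹ * D1⁻¹)‖ = ‖(1 : ℂ) - μ‖ * ‖Dμ⁻¹ * D1⁻¹‖ := norm_smul _ _
    have b4 : ‖Dμ⁻¹ * D1⁻¹‖ ≤ ‖Dμ⁻¹‖ * ‖D1⁻¹‖ := Matrix.linfty_opNorm_mul _ _
    have b6 : D1⁻¹ = X' := hRz1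
    have step : ‖J * ((1 - μ) • (Dμ⁻¹ * D1⁻¹)) * Bd'‖ ≤
        ‖J‖ * (‖(1 : ℂ) - μ‖ * (R' * ‖X'‖)) * ‖Bd'‖ := by
      refine le_trans b1 (mul_le_mul_of_nonneg_right ?_ (norm_nonneg _))
      refine le_trans b2 (mul_le_mul_of_nonneg_left ?_ (norm_nonneg _))
      rw [b3]
      refine mul_le_mul_of_nonneg_left ?_ (norm_nonneg _)
      refine le_trans b4 ?_
      rw [b6]
      exact mul_le_mul_of_nonneg_right hRzμ (norm_nonneg _)
    refine le_trans step (le_of_eq ?_)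
    rw [hK]
    ring
  -- final contradiction
  have keyEq2 : ((1 : ℂ) - μ - (ε : ℂ)) • y = (ε : ℂ) • ((T - 1) *ᵥ y) := by
    rw [Matrix.sub_mulVec, Matrix.one_mulVec, smul_sub, ← keyEq, ← sub_smul]
  have c1 : ‖(1 : ℂ) - μ - (ε : ℂ)‖ ≤ ε * (K * ‖(1 : ℂ) - μ‖) := by
    have h0 : ‖((1 : ℂ) - μ - (ε : ℂ)) • y‖ ≤ ε * (K * ‖(1 : ℂ) - μ‖) * ‖y‖ := by
      rw [keyEq2, norm_smul]
      have hb : ‖(T - 1) *ᵥ y‖ ≤ ‖T - 1‖ * ‖y‖ := Matrix.linfty_opNorm_mulVec _ _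
      have hεn : ‖(ε : ℂ)‖ = ε := by
        rw [Complex.norm_real, Real.norm_eq_abs, abs_of_pos hε0]
      rw [hεn]
      have hb2 : ‖(T - 1) *ᵥ y‖ ≤ (K * ‖(1 : ℂ) - μ‖) * ‖y‖ :=
        le_trans hb (mul_le_mul_of_nonneg_right hTdiff (norm_nonneg _))
      calc ε * ‖(T - 1) *ᵥ y‖ ≤ ε * ((K * ‖(1 : ℂ) - μ‖) * ‖y‖) :=
            mul_le_mul_of_nonneg_left hb2 hε0.le
        _ = ε * (K * ‖(1 : ℂ) - μ‖) * ‖y‖ := by ring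
    rw [norm_smul] at h0
    exact le_of_mul_le_mul_right h0 hynorm
  have hεn' : ‖(ε : ℂ)‖ = ε := by
    rw [Complex.norm_real, Real.norm_eq_abs, abs_of_pos hε0]
  have c2 : ‖(1 : ℂ) - μ‖ ≤ ‖(1 : ℂ) - μ - (ε : ℂ)‖ + ε := by
    calc ‖(1 : ℂ) - μ‖ = ‖((1 : ℂ) - μ - (ε : ℂ)) + (ε : ℂ)‖ := by rw [sub_add_cancel]
      _ ≤ ‖(1 : ℂ) - μ - (ε : ℂ)‖ + ‖(ε : ℂ)‖ := norm_add_le _ _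
      _ = ‖(1 : ℂ) - μ - (ε : ℂ)‖ + ε := by rw [hεn']
  have hεK2 : ε * K ≤ 1 / 2 :=
    by linarith [hεK, (by ring : ε * (2 * K + 2) = 2 * (ε * K) + 2 * ε), hε0]
  have c3 : ‖(1 : ℂ) - μ‖ ≤ 2 * ε := by
    have hm : ε * K * ‖(1 : ℂ) - μ‖ ≤ (1 / 2) * ‖(1 : ℂ) - μ‖ :=
      mul_le_mul_of_nonneg_right hεK2 (norm_nonneg _)
    linarith [c2, c1, hm, (by ring : ε * (K * ‖(1 : ℂ) - μ‖) = ε * K * ‖(1 : ℂ) - μ‖)]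
  have c4 : ‖(1 : ℂ) - μ - (ε : ℂ)‖ ≤ 2 * K * ε ^ 2 := by
    refine le_trans c1 ?_
    calc ε * (K * ‖(1 : ℂ) - μ‖) = (ε * K) * ‖(1 : ℂ) - μ‖ := by ring
      _ ≤ (ε * K) * (2 * ε) := mul_le_mul_of_nonneg_left c3 (mul_nonneg hε0.le hK0)
      _ = 2 * K * ε ^ 2 := by ring
  have c5 : ‖μ‖ ≤ (1 - ε) + 2 * K * ε ^ 2 := by
    have hsum : μ = (((1 - ε : ℝ) : ℂ)) - ((1 : ℂ) - μ - (ε : ℂ)) := by push_cast; ring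
    rw [hsum]
    refine le_trans (norm_sub_le _ _) ?_
    have h6 : ‖((1 - ε : ℝ) : ℂ)‖ = 1 - ε := by
      rw [Complex.norm_real, Real.norm_eq_abs]
      exact abs_of_pos (by linarith)
    rw [h6]
    linarith
  have h5 : 2 * (ε * K) < 1 :=
    by linarith [hεK, (by ring : ε * (2 * K + 2) = 2 * (ε * K) + 2 * ε), hε0]
  have h6 : 2 * (ε * K) * ε < 1 * ε := mul_lt_mul_of_pos_right h5 hε0
  linarith [c5, hlt, h6, (by ring : 2 * K * ε ^ 2 = 2 * (ε * K) * ε)]
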